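/- Let q be a prime power, χ₁ a multiplicative character of F_q, χ₂ a nontrivial multiplicative character of F_q with χ₁ ≠ χ₂, and u,v ∈ F_q^*. Then |Σ_{a ∈ F_q^*} χ₁χ₂^{-1}(a)·χ₂(ua² + v)| ≤ 2√q, where nontrivial characters are extended by χ(0)=0. -/

import Mathlib

open Finset

section Aux

variable {F : Type*} [Field F] [Fintype F]

private lemma mulChar_abs_eq_one (χ : MulChar F ℂ) {x : F} (hx : x ≠ 0) :
    ‖χ x‖ = 1 := by
  have h : χ x ^ (Fintype.card F - 1) = 1 := by
    rw [← map_pow, FiniteField.pow_card_sub_one_eq_one x hx, map_one]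
  have hn : Fintype.card F - 1 ≠ 0 := by
    have := Fintype.one_lt_card (α := F)
    omega
  simpa using Complex.norm_eq_one_of_pow_eq_one h hn

private lemma mulChar_abs_le_one (χ : MulChar F ℂ) (x : F) :
    ‖χ x‖ ≤ 1 := by
  rcases eq_or_ne x 0 with rfl | hx
  · simp [MulChar.map_nonunit χ (not_isUnit_zero (M₀ := F))]
  · exact (mulChar_abs_eq_one χ hx).le

private lemma one_le_sqrt_card : (1 : ℝ) ≤ Real.sqrt (Fintype.card F) := by
  rw [show (1:ℝ) = Real.sqrt 1 by simp]
  exact Real.sqrt_le_sqrt (by exact_mod_cast Fintype.card_pos)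

private lemma conj_jacobiSum (ψ χ : MulChar F ℂ) :
    (starRingEnd ℂ) (jacobiSum ψ χ) = jacobiSum ψ⁻¹ χ⁻¹ := by
  unfold jacobiSum
  rw [map_sum]
  refine Finset.sum_congr rfl fun x _ => ?_
  rw [map_mul, starRingEnd_apply, starRingEnd_apply,
    MulChar.star_apply', MulChar.star_apply']

/-- Key bound: `|J(ψ, χ)| ≤ √q` when `χ` is nontrivial. -/
private lemma abs_jacobiSum_le (ψ χ : MulChar F ℂ) (hχ : χ ≠ 1) :
    ‖jacobiSum ψ χ‖ ≤ Real.sqrt (Fintype.card F) := by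
  rcases eq_or_ne ψ 1 with rfl | hψ
  · rw [jacobiSum_one_nontrivial hχ]
    simpa using one_le_sqrt_card
  rcases eq_or_ne (ψ * χ) 1 with hψχ | hψχ
  · have hψeq : ψ = χ⁻¹ := by rw [eq_inv_iff_mul_eq_one]; exact hψχ
    subst hψeq
    rw [show jacobiSum χ⁻¹ χ = jacobiSum χ⁻¹ (χ⁻¹)⁻¹ by rw [inv_inv],
      jacobiSum_nontrivial_inv (by rwa [ne_eq, inv_eq_one])]
    rw [norm_neg]
    rw [mulChar_abs_eq_one _ (by norm_num : (-1 : F) ≠ 0)]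
    exact one_le_sqrt_card
  · -- all characters nontrivial: |J| = √q
    have hchar : ringChar ℂ ≠ ringChar F := by
      have h1 : ringChar ℂ = 0 := ringChar.eq_zero
      have h2 : (ringChar F).Prime := by
        haveI := ringChar.charP F
        exact CharP.char_is_prime F (ringChar F)
      rw [h1]
      exact fun h => h2.ne_zero h.symm
    have key := jacobiSum_mul_jacobiSum_inv hchar hψ hχ hψχ
    have hconj : jacobiSum ψ χ * (starRingEnd ℂ) (jacobiSum ψ χ) = (Fintype.card F : ℂ) := by
      rw [conj_jacobiSum]; exact key
    have hnsq : Complex.normSq (jacobiSum ψ χ) = (Fintype.card F : ℝ) := by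
      have := hconj
      rw [Complex.mul_conj] at this
      exact_mod_cast this
    rw [Complex.norm_def, hnsq]

/-- The "linear" character sum is bounded by `√q`. -/
private lemma abs_linear_sum_le (ψ χ₂ : MulChar F ℂ) (hχ₂ : χ₂ ≠ 1)
    {u v : F} (hu : u ≠ 0) (hv : v ≠ 0) :
    ‖∑ s : F, ψ s * χ₂ (u * s + v)‖ ≤ Real.sqrt (Fintype.card F) := by
  have hc : (-(v / u)) ≠ 0 := by
    simp [div_eq_zero_iff, hu, hv]
  have hpt : ∀ t : F, ψ (-(v / u) * t) * χ₂ (u * (-(v / u) * t) + v)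
      = ψ (-(v / u)) * χ₂ v * (ψ t * χ₂ (1 - t)) := by
    intro t
    have harg : u * (-(v / u) * t) + v = v * (1 - t) := by
      field_simp
      ring
    rw [harg, map_mul, map_mul]
    ring
  have hre : (∑ s : F, ψ s * χ₂ (u * s + v))
      = ψ (-(v / u)) * χ₂ v * jacobiSum ψ χ₂ := by
    rw [show jacobiSum ψ χ₂ = ∑ x : F, ψ x * χ₂ (1 - x) from rfl]
    rw [← Equiv.sum_comp (Equiv.mulLeft₀ (-(v / u)) hc) (fun s => ψ s * χ₂ (u * s + v)),
      Finset.mul_sum]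
    refine Finset.sum_congr rfl fun t _ => ?_
    simp only [Equiv.mulLeft₀_apply]
    exact hpt t
  rw [hre, norm_mul, norm_mul]
  calc ‖ψ (-(v / u))‖ * ‖χ₂ v‖ * ‖jacobiSum ψ χ₂‖
      ≤ 1 * 1 * Real.sqrt (Fintype.card F) := by
        gcongr
        · exact mulChar_abs_le_one _ _
        · exact mulChar_abs_le_one _ _
        · exact abs_jacobiSum_le ψ χ₂ hχ₂
    _ = Real.sqrt (Fintype.card F) := by ring

end Aux

/-- Weil-type bound: for a multiplicative character `χ₁`, a nontrivial
multiplicative character `χ₂ ≠ χ₁`, and nonzero `u, v`,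
`|∑_{a ∈ F*} χ₁χ₂⁻¹(a) χ₂(ua² + v)| ≤ 2√q`. -/
theorem stmt_17 (F : Type*) [Field F] [Fintype F] [DecidableEq F]
    (χ₁ χ₂ : MulChar F ℂ) (h₂ : χ₂ ≠ 1) (h₁₂ : χ₁ ≠ χ₂)
    (u v : F) (hu : u ≠ 0) (hv : v ≠ 0) :
    ‖∑ a ∈ Finset.univ \ {0}, (χ₁ * χ₂⁻¹) a * χ₂ (u * a ^ 2 + v)‖
      ≤ 2 * Real.sqrt (Fintype.card F) := by
  set χ : MulChar F ℂ := χ₁ * χ₂⁻¹ with hχdef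
  have hsq0 : (0:ℝ) ≤ Real.sqrt (Fintype.card F) := Real.sqrt_nonneg _
  -- extend the sum over all of F
  have hext : (∑ a ∈ Finset.univ \ {0}, χ a * χ₂ (u * a ^ 2 + v))
      = ∑ a : F, χ a * χ₂ (u * a ^ 2 + v) := by
    rw [Finset.sum_sdiff_eq_sub (Finset.subset_univ _), Finset.sum_singleton,
      MulChar.map_nonunit χ (not_isUnit_zero (M₀ := F)), zero_mul, sub_zero]
  rw [hext]
  -- helper: given a square root ξ of χ, rewrite the summand
  have hsummand : ∀ (ξ : MulChar F ℂ), ξ ^ 2 = χ →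
      ∀ a : F, χ a * χ₂ (u * a ^ 2 + v) = ξ (a ^ 2) * χ₂ (u * a ^ 2 + v) := by
    intro ξ hξ a
    rw [← hξ, pow_two, MulChar.mul_apply, ← map_mul, ← pow_two]
  by_cases hp2 : ringChar F = 2
  · -- characteristic 2: squaring is a bijection, one Jacobi sum
    have h2 : (2 : F) = 0 := by
      have := ringChar.charP F
      rw [hp2] at this
      exact CharP.cast_eq_zero F 2
    -- χ has a square root
    obtain ⟨n, hp, hc⟩ := FiniteField.card F (ringChar F)
    have hcard : Fintype.card F = 2 ^ (n : ℕ) := by rw [hc, hp2]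
    have hdvd : 2 ∣ Fintype.card F := by
      rw [hcard]; exact dvd_pow_self 2 n.ne_zero
    have hξsq : (χ ^ (Fintype.card F / 2)) ^ 2 = χ := by
      rw [← pow_mul, Nat.div_mul_cancel hdvd]
      have h1 : χ ^ (Fintype.card F - 1) = 1 :=
        orderOf_dvd_iff_pow_eq_one.mp (MulChar.orderOf_dvd_card_sub_one F χ)
      calc χ ^ Fintype.card F = χ ^ (Fintype.card F - 1) * χ := by
            rw [← pow_succ]
            congr 1
            have := Fintype.card_pos (α := F)
            omega
        _ = χ := by rw [h1, one_mul]
    set ξ := χ ^ (Fintype.card F / 2) with hξdef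
    -- squaring bijection
    have hbij : Function.Bijective (fun a : F => a ^ 2) := by
      rw [Fintype.bijective_iff_injective_and_card]
      refine ⟨fun a b hab => ?_, rfl⟩
      simp only at hab
      have hz : (a - b) ^ 2 = 0 := by
        linear_combination hab + (b ^ 2 - a * b) * h2
      exact sub_eq_zero.mp (pow_eq_zero_iff (two_ne_zero) |>.mp hz)
    have hrw : (∑ a : F, χ a * χ₂ (u * a ^ 2 + v))
        = ∑ s : F, ξ s * χ₂ (u * s + v) := by
      rw [Finset.sum_congr rfl fun a _ => hsummand ξ hξsq a]
      exact Function.Bijective.sum_comp hbij (fun s => ξ s * χ₂ (u * s + v))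
    rw [hrw]
    calc ‖∑ s : F, ξ s * χ₂ (u * s + v)‖
        ≤ Real.sqrt (Fintype.card F) := abs_linear_sum_le ξ χ₂ h₂ hu hv
      _ ≤ 2 * Real.sqrt (Fintype.card F) := by linarith
  · -- odd characteristic
    by_cases hm1 : χ (-1) = 1
    · -- χ is even: it has a square root ξ
      have hξex : ∃ ξ : MulChar F ℂ, ξ ^ 2 = χ := by
        haveI : NeZero ((Monoid.exponent Fˣ : ℂ)) :=
          ⟨Nat.cast_ne_zero.mpr Monoid.exponent_ne_zero_of_finite⟩
        obtain ⟨e⟩ := MulChar.mulEquiv_units F ℂ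
        have hsq : IsSquare (e χ) := by
          rw [FiniteField.unit_isSquare_iff hp2]
          rw [← map_pow]
          have : χ ^ (Fintype.card F / 2) = 1 := by
            ext a
            rw [MulChar.pow_apply_coe, MulChar.one_apply_coe, ← map_pow]
            rcases FiniteField.pow_dichotomy hp2 (a.ne_zero) with h | h
            · rw [h, map_one]
            · rw [h]; exact hm1
          rw [this, map_one]
        obtain ⟨r, hr⟩ := hsq
        exact ⟨e.symm r, by rw [pow_two, ← map_mul, ← hr, MulEquiv.symm_apply_apply]⟩
      obtain ⟨ξ, hξ⟩ := hξex
      set lam : MulChar F ℂ := (quadraticChar F).ringHomComp (Int.castRingHom ℂ) with hlam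
      -- fiberwise decomposition over squares
      have hdecomp : (∑ a : F, χ a * χ₂ (u * a ^ 2 + v))
          = (∑ s : F, ξ s * χ₂ (u * s + v)) + ∑ s : F, (lam * ξ) s * χ₂ (u * s + v) := by
        rw [Finset.sum_congr rfl fun a _ => hsummand ξ hξ a]
        rw [← Finset.sum_fiberwise' Finset.univ (fun a : F => a ^ 2)
          (fun s => ξ s * χ₂ (u * s + v))]
        rw [← Finset.sum_add_distrib]
        refine Finset.sum_congr rfl fun b _ => ?_
        rw [Finset.sum_const]
        have hcard : ({a ∈ Finset.univ | a ^ 2 = b} : Finset F).card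
            = ((quadraticChar F b + 1 : ℤ)).toNat := by
          have := quadraticChar_card_sqrts hp2 b
          have hfs : ({x : F | x ^ 2 = b} : Set F).toFinset
              = ({a ∈ Finset.univ | a ^ 2 = b} : Finset F) := by
            ext x; simp
          rw [hfs] at this
          omega
        rw [hcard]
        have hnonneg : (0 : ℤ) ≤ quadraticChar F b + 1 := by
          rcases eq_or_ne b 0 with rfl | hb
          · simp
          · rcases quadraticChar_dichotomy hb with h | h <;> rw [h] <;> norm_num
        have hsmul : (((quadraticChar F b + 1 : ℤ)).toNat : ℂ)
            = (lam b : ℂ) + 1 := by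
          have h1 : (((quadraticChar F b + 1 : ℤ)).toNat : ℤ) = quadraticChar F b + 1 :=
            Int.toNat_of_nonneg hnonneg
          have hlb : lam b = ((quadraticChar F b : ℤ) : ℂ) := by
            simp [hlam, MulChar.ringHomComp_apply]
          calc (((quadraticChar F b + 1 : ℤ)).toNat : ℂ)
              = ((((quadraticChar F b + 1 : ℤ)).toNat : ℤ) : ℂ) := by push_cast; ring
            _ = ((quadraticChar F b + 1 : ℤ) : ℂ) := by rw [h1]
            _ = (lam b : ℂ) + 1 := by rw [hlb]; push_cast; ring
        rw [nsmul_eq_mul, hsmul, MulChar.mul_apply]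
        ring
      rw [hdecomp]
      calc ‖(∑ s : F, ξ s * χ₂ (u * s + v))
              + ∑ s : F, (lam * ξ) s * χ₂ (u * s + v)‖
          ≤ ‖∑ s : F, ξ s * χ₂ (u * s + v)‖
              + ‖∑ s : F, (lam * ξ) s * χ₂ (u * s + v)‖ := norm_add_le _ _
        _ ≤ Real.sqrt (Fintype.card F) + Real.sqrt (Fintype.card F) := by
            gcongr
            · exact abs_linear_sum_le ξ χ₂ h₂ hu hv
            · exact abs_linear_sum_le (lam * ξ) χ₂ h₂ hu hv
        _ = 2 * Real.sqrt (Fintype.card F) := by ring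
    · -- χ is odd: the sum vanishes
      have hzero : (∑ a : F, χ a * χ₂ (u * a ^ 2 + v)) = 0 := by
        have hneg : (∑ a : F, χ a * χ₂ (u * a ^ 2 + v))
            = χ (-1) * ∑ a : F, χ a * χ₂ (u * a ^ 2 + v) := by
          rw [Finset.mul_sum]
          rw [← Equiv.sum_comp (Equiv.neg F) (fun a => χ a * χ₂ (u * a ^ 2 + v))]
          refine Finset.sum_congr rfl fun a _ => ?_
          simp only [Equiv.neg_apply]
          rw [neg_sq]
          rw [show (-a : F) = -1 * a from (neg_one_mul a).symm, map_mul]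
          ring
        have : (χ (-1) - 1) * (∑ a : F, χ a * χ₂ (u * a ^ 2 + v)) = 0 := by
          rw [sub_mul, one_mul, ← hneg, sub_self]
        rcases mul_eq_zero.mp this with h | h
        · exact absurd (sub_eq_zero.mp h) hm1
        · exact h
      rw [hzero, norm_zero]
      positivity
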